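/- If the set of globally optimal multilayer partitions at couplings ω_1 and ω_2 coincide, where ω_1 > ω_2 > 0, then for every intermediate coupling ω ∈ (ω_2, ω_1) the set of globally optimal partitions equals this same set. -/

import Mathlib

open Finset

/-- Kronecker delta on community labels, as a real number. -/
noncomputable def kdelta (a b : ℕ) : ℝ := if a = b then 1 else 0

/-- Persistence between layers `s` and `s+1`: the number of nodes whose community
assignment is unchanged from layer `s` to layer `s+1`. -/
def persAt (N : ℕ) (c : ℕ → Fin N → ℕ) (s : ℕ) : ℕ :=
  (Finset.univ.filter fun i : Fin N => c s i = c (s + 1) i).card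

/-- Total persistence of a multilayer partition: `Pers(C) = Σ_{s=1}^{|T|-1} Σ_i δ(c_{i_s}, c_{i_{s+1}})`. -/
def pers (N T : ℕ) (c : ℕ → Fin N → ℕ) : ℕ :=
  ∑ s ∈ Finset.range (T - 1), persAt N c s

/-- Multilayer modularity quality function
`Q(C) = Σ_s Σ_{i,j} B_{ijs} δ(c_{i_s}, c_{j_s}) + 2 ω Pers(C)`. -/
noncomputable def Q (N T : ℕ) (B : ℕ → Fin N → Fin N → ℝ) (ω : ℝ) (c : ℕ → Fin N → ℕ) : ℝ :=
  (∑ s ∈ Finset.range T, ∑ i : Fin N, ∑ j : Fin N, B s i j * kdelta (c s i) (c s j))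
    + 2 * ω * (pers N T c : ℝ)

/-- A multilayer partition (given by its community-assignment function) is globally
optimal for inter-layer coupling `ω` if it maximizes the multilayer quality function. -/
def IsOptimal (N T : ℕ) (B : ℕ → Fin N → Fin N → ℝ) (ω : ℝ) (c : ℕ → Fin N → ℕ) : Prop :=
  ∀ c' : ℕ → Fin N → ℕ, Q N T B ω c' ≤ Q N T B ω c

/-- Adjacency (nonzero weight) in the multilayer modularity matrix: intra-layer entries
`B_{ijs}` and ordinal diagonal uniform inter-layer coupling `ω` between consecutive layers. -/
def Adj (N T : ℕ) (B : ℕ → Fin N → Fin N → ℝ) (ω : ℝ) (p q : ℕ × Fin N) : Prop :=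
  (p.1 = q.1 ∧ p.1 < T ∧ B p.1 p.2 q.2 ≠ 0) ∨
  (p.2 = q.2 ∧ ω ≠ 0 ∧ ((p.1 + 1 = q.1 ∧ q.1 < T) ∨ (q.1 + 1 = p.1 ∧ p.1 < T)))

/-- No community of the multilayer partition contains a component that is disconnected in
the weighted graph whose adjacency matrix is the multilayer modularity matrix: any two
node-layer pairs in the same community are joined by a path staying inside that community. -/
def NoDisconnectedCommunities (N T : ℕ) (B : ℕ → Fin N → Fin N → ℝ) (ω : ℝ)
    (c : ℕ → Fin N → ℕ) : Prop :=
  ∀ p q : ℕ × Fin N, p.1 < T → q.1 < T → c p.1 p.2 = c q.1 q.2 →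
    Relation.ReflTransGen
      (fun a b => Adj N T B ω a b ∧ c a.1 a.2 = c p.1 p.2 ∧ c b.1 b.2 = c p.1 p.2) p q


/-- `Q` is affine in the coupling `ω`. -/
lemma Q_affine (N T : ℕ) (B : ℕ → Fin N → Fin N → ℝ) (ω : ℝ) (c : ℕ → Fin N → ℕ) :
    Q N T B ω c = Q N T B 0 c + 2 * ω * (pers N T c : ℝ) := by
  unfold Q; ring

/-- An optimal partition exists for every coupling. -/
lemma exists_optimal (N T : ℕ) (B : ℕ → Fin N → Fin N → ℝ) (ω : ℝ) :
    ∃ c, IsOptimal N T B ω c := by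
  classical
  let ext : (Fin T → Fin N → Fin (N * T + 1)) → ℕ → Fin N → ℕ :=
    fun f s i => if h : s < T then (f ⟨s, h⟩ i : ℕ) else 0
  obtain ⟨f, -, hf⟩ := Finset.exists_max_image
    (Finset.univ : Finset (Fin T → Fin N → Fin (N * T + 1)))
    (fun f => Q N T B ω (ext f)) Finset.univ_nonempty
  refine ⟨ext f, fun c' => ?_⟩
  -- canonical relabeling of `c'` with small labels
  set V : Finset ℕ := ((Finset.range T) ×ˢ (Finset.univ : Finset (Fin N))).image
      (fun p => c' p.1 p.2) with hV
  set l : List ℕ := V.sort (· ≤ ·) with hl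
  have hmem : ∀ (s : ℕ) (i : Fin N), s < T → c' s i ∈ l := by
    intro s i hs
    rw [hl, Finset.mem_sort, hV]
    exact Finset.mem_image.2 ⟨(s, i), Finset.mem_product.2
      ⟨Finset.mem_range.2 hs, Finset.mem_univ i⟩, rfl⟩
  have hlen : l.length ≤ N * T := by
    rw [hl, Finset.length_sort, hV]
    calc V.card ≤ ((Finset.range T) ×ˢ (Finset.univ : Finset (Fin N))).card :=
          Finset.card_image_le
      _ = T * N := by simp [Finset.card_product, mul_comm]
      _ = N * T := Nat.mul_comm _ _
  have hidx : ∀ (s : ℕ) (i : Fin N), s < T → l.idxOf (c' s i) < N * T + 1 := by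
    intro s i hs
    exact lt_of_lt_of_le (List.idxOf_lt_length_iff.2 (hmem s i hs)) (le_trans hlen (Nat.le_succ _))
  let g : Fin T → Fin N → Fin (N * T + 1) :=
    fun s i => ⟨l.idxOf (c' (s : ℕ) i), hidx s i s.2⟩
  have hg : ∀ (s : ℕ), s < T → ∀ i : Fin N, ext g s i = l.idxOf (c' s i) := by
    intro s hs i
    simp only [ext, dif_pos hs, g]
  have hiff : ∀ (s s' : ℕ), s < T → s' < T → ∀ (i i' : Fin N),
      (ext g s i = ext g s' i' ↔ c' s i = c' s' i') := by
    intro s s' hs hs' i i'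
    rw [hg s hs i, hg s' hs' i']
    exact List.idxOf_inj (hmem s i hs)
  have key : Q N T B ω (ext g) = Q N T B ω c' := by
    unfold Q
    congr 1
    · refine Finset.sum_congr rfl fun s hs => ?_
      have hs' := Finset.mem_range.1 hs
      refine Finset.sum_congr rfl fun i _ => Finset.sum_congr rfl fun j _ => ?_
      unfold kdelta
      by_cases h : c' s i = c' s j
      · rw [if_pos h, if_pos ((hiff s s hs' hs' i j).2 h)]
      · rw [if_neg h, if_neg (fun h' => h ((hiff s s hs' hs' i j).1 h'))]
    · congr 1
      unfold pers persAt
      refine congrArg _ (Finset.sum_congr rfl fun s hs => ?_)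
      have hs1 : s < T - 1 := Finset.mem_range.1 hs
      have hsT : s < T := lt_of_lt_of_le hs1 (Nat.sub_le _ _)
      have hs1T : s + 1 < T := by omega
      exact congrArg Finset.card (Finset.filter_congr fun i _ => by
        simpa using (hiff s (s + 1) hsT hs1T i i))
  calc Q N T B ω c' = Q N T B ω (ext g) := key.symm
    _ ≤ Q N T B ω (ext f) := hf g (Finset.mem_univ g)

/-- **Corollary 3.** If the sets of globally optimal multilayer partitions at couplings
`ω₁ > ω₂ > 0` coincide, then for every intermediate coupling `ω ∈ (ω₂, ω₁)` the set of
globally optimal partitions equals this same set. -/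
theorem optimal_sets_equal_on_interval
    (N T : ℕ)
    (B : ℕ → Fin N → Fin N → ℝ)
    (ω₁ ω₂ : ℝ) (h21 : ω₂ < ω₁) (h2 : 0 < ω₂)
    (heq : ∀ c : ℕ → Fin N → ℕ, IsOptimal N T B ω₁ c ↔ IsOptimal N T B ω₂ c) :
    ∀ ω : ℝ, ω₂ < ω → ω < ω₁ →
      ∀ c : ℕ → Fin N → ℕ, IsOptimal N T B ω c ↔ IsOptimal N T B ω₁ c := by
  intro ω hω2 hω1 c
  have step1 : ∀ d, IsOptimal N T B ω₁ d → IsOptimal N T B ω d := by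
    intro d hd1
    have hd2 := (heq d).1 hd1
    intro c'
    have h1 := hd1 c'
    have h2 := hd2 c'
    rw [Q_affine N T B ω₁, Q_affine N T B ω₁] at h1
    rw [Q_affine N T B ω₂, Q_affine N T B ω₂] at h2
    rw [Q_affine N T B ω, Q_affine N T B ω]
    have k1 := mul_le_mul_of_nonneg_left h1 (sub_nonneg.2 hω2.le)
    have k2 := mul_le_mul_of_nonneg_left h2 (sub_nonneg.2 hω1.le)
    nlinarith [k1, k2, sub_pos.2 h21]
  obtain ⟨c₀, hc₀⟩ := exists_optimal N T B ω₁
  have hc₀2 : IsOptimal N T B ω₂ c₀ := (heq c₀).1 hc₀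
  have hc₀ω : IsOptimal N T B ω c₀ := step1 c₀ hc₀
  constructor
  · intro hc
    have e : Q N T B ω c = Q N T B ω c₀ := le_antisymm (hc₀ω c) (hc c₀)
    have h1 := hc₀ c
    have h2 := hc₀2 c
    rw [Q_affine N T B ω₁, Q_affine N T B ω₁] at h1
    rw [Q_affine N T B ω₂, Q_affine N T B ω₂] at h2
    rw [Q_affine N T B ω, Q_affine N T B ω] at e
    have hp : (pers N T c : ℝ) = pers N T c₀ := by
      have hple : (pers N T c : ℝ) ≤ pers N T c₀ := by nlinarith [sub_pos.2 hω1]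
      have hpge : (pers N T c₀ : ℝ) ≤ pers N T c := by nlinarith [sub_pos.2 hω2]
      linarith
    have ha : Q N T B 0 c = Q N T B 0 c₀ := by
      rw [hp] at e; linarith
    intro c'
    calc Q N T B ω₁ c' ≤ Q N T B ω₁ c₀ := hc₀ c'
      _ = Q N T B ω₁ c := by
          rw [Q_affine N T B ω₁, Q_affine N T B ω₁, ha, hp]
  · exact step1 c
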